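/- If a unitary U on n qubits satisfies e^{iθ}U = U' where both U and U' have all entries in the ring Z[1/√2, i] and U has at least one nonzero entry, then e^{iθ} ∈ Z[1/√2, i] and hence θ = kπ/4 for some integer k; in particular there are exactly 8 possible global phase factors relating two such unitaries. -/
import Mathlib


open Complex Real

/-- The ring `ℤ[1/√2, i]` viewed as a subset of `ℂ`. -/
def dyadicRing : Set ℂ :=
  {z | ∃ (a b c d : ℤ) (m : ℕ),
    z = ((a : ℂ) + (b : ℂ) * Complex.exp (Complex.I * (Real.pi / 4 : ℝ))
          + (c : ℂ) * Complex.exp (Complex.I * (Real.pi / 2 : ℝ))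
          + (d : ℂ) * Complex.exp (Complex.I * (3 * Real.pi / 4 : ℝ)))
        / (Real.sqrt (2 ^ m) : ℝ)}

noncomputable def zz : ℂ := Complex.exp (Complex.I * (Real.pi / 4 : ℝ))

noncomputable def v (a b c d : ℤ) : ℂ := a + b*zz + c*zz^2 + d*zz^3

lemma zz_val : zz = (Real.sqrt 2 / 2 : ℝ) + (Real.sqrt 2 / 2 : ℝ) * Complex.I := by
  rw [zz, mul_comm, Complex.exp_mul_I]
  rw [show ((Real.pi / 4 : ℝ) : ℂ) = ((Real.pi/4 : ℝ) : ℂ) from rfl]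
  rw [← Complex.ofReal_cos, ← Complex.ofReal_sin, Real.cos_pi_div_four, Real.sin_pi_div_four]

lemma sqrt2_sq : (Real.sqrt 2) * (Real.sqrt 2) = 2 := Real.mul_self_sqrt (by norm_num)

lemma zz_sq : zz^2 = Complex.I := by
  rw [zz_val]
  have h : ((Real.sqrt 2 : ℝ) : ℂ) * ((Real.sqrt 2 : ℝ) : ℂ) = 2 := by
    rw [← Complex.ofReal_mul, sqrt2_sq]; norm_num
  push_cast
  linear_combination (Complex.I/2) * h + (((Real.sqrt 2 : ℝ):ℂ)^2/4) * Complex.I_sq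

lemma zz_pow4 : zz^4 = -1 := by
  rw [show (4:ℕ) = 2*2 from rfl, pow_mul, zz_sq, Complex.I_sq]

lemma sqrt2C : ((Real.sqrt 2 : ℝ) : ℂ) = zz - zz^3 := by
  have h3 : zz^3 = zz^2 * zz := by ring
  rw [h3, zz_sq, zz_val]
  have h : ((Real.sqrt 2 : ℝ) : ℂ) * ((Real.sqrt 2 : ℝ) : ℂ) = 2 := by
    rw [← Complex.ofReal_mul, sqrt2_sq]; norm_num
  push_cast
  linear_combination (((Real.sqrt 2:ℝ):ℂ)/2) * Complex.I_sq

lemma conj_zz : (starRingEnd ℂ) zz = -zz^3 := by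
  have h3 : zz^3 = zz^2 * zz := by ring
  rw [h3, zz_sq, zz_val]
  rw [map_add, map_mul, Complex.conj_ofReal, Complex.conj_I]
  push_cast
  linear_combination (((Real.sqrt 2:ℝ):ℂ)/2) * Complex.I_sq

lemma v_mul (a b c d a' b' c' d' : ℤ) : v a b c d * v a' b' c' d' =
    v (a*a' - b*d' - c*c' - d*b') (a*b' + b*a' - c*d' - d*c')
      (a*c' + b*b' + c*a' - d*d') (a*d' + b*c' + c*b' + d*a') := by
  unfold v
  push_cast
  linear_combination (((b:ℂ)*d' + c*c' + d*b') + ((c:ℂ)*d' + d*c')*zz + ((d:ℂ)*d')*zz^2) * zz_pow4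

lemma v_conj (a b c d : ℤ) : (starRingEnd ℂ) (v a b c d) = v a (-d) (-c) (-b) := by
  unfold v
  simp only [map_add, map_mul, map_pow, conj_zz, map_intCast]
  push_cast
  linear_combination ((c:ℂ)*zz^2 - (d:ℂ)*zz*(zz^4 - 1)) * zz_pow4

lemma v_sqrt2_mul (a b c d : ℤ) :
    ((Real.sqrt 2 : ℝ) : ℂ) * v a b c d = v (b-d) (a+c) (b+d) (c-a) := by
  rw [sqrt2C]
  unfold v
  push_cast
  linear_combination (((d:ℂ) - b) - (c:ℂ)*zz - (d:ℂ)*zz^2) * zz_pow4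

lemma v_add (a b c d a' b' c' d' : ℤ) :
    v a b c d + v a' b' c' d' = v (a+a') (b+b') (c+c') (d+d') := by
  unfold v; push_cast; ring

lemma int_sqrt2 {p q : ℤ} (h : (p:ℝ) + (q:ℝ) * Real.sqrt 2 = 0) : p = 0 ∧ q = 0 := by
  rcases eq_or_ne q 0 with hq | hq
  · subst hq
    simp at h
    exact ⟨by exact_mod_cast h, rfl⟩
  · exfalso
    have hq' : (q:ℝ) ≠ 0 := Int.cast_ne_zero.mpr hq
    have hs : Real.sqrt 2 = ((-p : ℚ)/(q:ℚ) : ℚ) := by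
      push_cast
      field_simp
      linarith
    exact irrational_sqrt_two ⟨(-p : ℚ)/(q:ℚ), hs.symm⟩

lemma int_sqrt2' {p q : ℤ} (h : (p:ℂ) + (q:ℂ) * ((Real.sqrt 2 : ℝ):ℂ) = 0) : p = 0 ∧ q = 0 := by
  apply int_sqrt2 (p := p) (q := q)
  exact_mod_cast h

lemma v_eq_zero {a b c d : ℤ} (h : v a b c d = 0) : a = 0 ∧ b = 0 ∧ c = 0 ∧ d = 0 := by
  have hc : v a (-d) (-c) (-b) = 0 := by rw [← v_conj, h, map_zero]
  have h1 : ((2*a : ℤ):ℂ) + ((b - d : ℤ):ℂ) * ((Real.sqrt 2:ℝ):ℂ) = 0 := by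
    rw [sqrt2C]; unfold v at h hc; push_cast at h hc ⊢; linear_combination h + hc
  obtain ⟨ha, hbd⟩ := int_sqrt2' h1
  have h2 : ((b+d:ℤ):ℂ) + ((2*c:ℤ):ℂ)*zz + ((b+d:ℤ):ℂ)*zz^2 = 0 := by
    unfold v at h hc; push_cast at h hc ⊢
    linear_combination (-zz^3) * h - (-zz^3) * hc +
      (((b:ℂ)+d) + 2*(c:ℂ)*zz + ((b:ℂ)+d)*zz^2) * zz_pow4
  have h2c := congrArg (starRingEnd ℂ) h2
  simp only [map_add, map_mul, map_pow, conj_zz, map_intCast, map_zero] at h2c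
  have h3 : ((2*(b+d) : ℤ):ℂ) + ((2*c:ℤ):ℂ) * ((Real.sqrt 2:ℝ):ℂ) = 0 := by
    rw [sqrt2C]; push_cast at h2 h2c ⊢
    linear_combination h2 + h2c - ((b:ℂ)+d)*zz^2 * zz_pow4
  obtain ⟨hbd2, hc2⟩ := int_sqrt2' h3
  refine ⟨by omega, by omega, by omega, by omega⟩

lemma v_inj {a b c d a' b' c' d' : ℤ} (h : v a b c d = v a' b' c' d') :
    a = a' ∧ b = b' ∧ c = c' ∧ d = d' := by
  have h0 : v (a-a') (b-b') (c-c') (d-d') = 0 := by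
    unfold v at *; push_cast at *; linear_combination h
  have := v_eq_zero h0
  omega

set_option maxHeartbeats 2000000 in
lemma descent (m : ℕ) (a b c d : ℤ) (hQ : a^2+b^2+c^2+d^2 = 2^m)
    (hL : a*b + b*c + c*d - d*a = 0) :
    ∃ k : Fin 8, v a b c d = (((Real.sqrt 2:ℝ):ℂ))^m * zz^(k:ℕ) := by
  induction m generalizing a b c d with
  | zero =>
    have hQ2 : a*a + b*b + c*c + d*d = 1 := by linear_combination hQ
    have ha1 : -1 ≤ a := by nlinarith [sq_nonneg b, sq_nonneg c, sq_nonneg d, sq_nonneg (a+1)]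
    have ha2 : a ≤ 1 := by nlinarith [sq_nonneg b, sq_nonneg c, sq_nonneg d, sq_nonneg (a-1)]
    have hb1 : -1 ≤ b := by nlinarith [sq_nonneg a, sq_nonneg c, sq_nonneg d, sq_nonneg (b+1)]
    have hb2 : b ≤ 1 := by nlinarith [sq_nonneg a, sq_nonneg c, sq_nonneg d, sq_nonneg (b-1)]
    have hc1 : -1 ≤ c := by nlinarith [sq_nonneg a, sq_nonneg b, sq_nonneg d, sq_nonneg (c+1)]
    have hc2 : c ≤ 1 := by nlinarith [sq_nonneg a, sq_nonneg b, sq_nonneg d, sq_nonneg (c-1)]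
    have hd1 : -1 ≤ d := by nlinarith [sq_nonneg a, sq_nonneg b, sq_nonneg c, sq_nonneg (d+1)]
    have hd2 : d ≤ 1 := by nlinarith [sq_nonneg a, sq_nonneg b, sq_nonneg c, sq_nonneg (d-1)]
    clear hQ hL
    interval_cases a <;> interval_cases b <;> interval_cases c <;> interval_cases d <;>
      first
      | (exfalso; omega)
      | exact ⟨⟨0, by norm_num⟩, by unfold v; push_cast; simp only [pow_zero, one_mul]; linear_combination (0:ℂ)⟩
      | exact ⟨⟨1, by norm_num⟩, by unfold v; push_cast; simp only [pow_zero, one_mul]; linear_combination (0:ℂ)⟩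
      | exact ⟨⟨2, by norm_num⟩, by unfold v; push_cast; simp only [pow_zero, one_mul]; linear_combination (0:ℂ)⟩
      | exact ⟨⟨3, by norm_num⟩, by unfold v; push_cast; simp only [pow_zero, one_mul]; linear_combination (0:ℂ)⟩
      | exact ⟨⟨4, by norm_num⟩, by unfold v; push_cast; simp only [pow_zero, one_mul]; linear_combination (-1:ℂ) * zz_pow4⟩
      | exact ⟨⟨5, by norm_num⟩, by unfold v; push_cast; simp only [pow_zero, one_mul]; linear_combination (-zz) * zz_pow4⟩
      | exact ⟨⟨6, by norm_num⟩, by unfold v; push_cast; simp only [pow_zero, one_mul]; linear_combination (-zz^2) * zz_pow4⟩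
      | exact ⟨⟨7, by norm_num⟩, by unfold v; push_cast; simp only [pow_zero, one_mul]; linear_combination (-zz^3) * zz_pow4⟩
  | succ m ih =>
    -- parity argument
    have hparity : ((a:ZMod 2) + (c:ZMod 2) = 0) ∧ ((b:ZMod 2) + (d:ZMod 2) = 0) := by
      have hQ2 : (a:ZMod 2)^2 + (b:ZMod 2)^2 + (c:ZMod 2)^2 + (d:ZMod 2)^2 = 0 := by
        have := congrArg (Int.cast : ℤ → ZMod 2) hQ
        push_cast at this
        rw [this]
        rw [show ((2:ZMod 2)) = 0 from rfl]
        exact zero_pow (Nat.succ_ne_zero m)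
      have hL2 : (a:ZMod 2)*(b:ZMod 2) + (b:ZMod 2)*(c:ZMod 2) + (c:ZMod 2)*(d:ZMod 2)
          - (d:ZMod 2)*(a:ZMod 2) = 0 := by
        have := congrArg (Int.cast : ℤ → ZMod 2) hL
        push_cast at this
        exact this
      revert hQ2 hL2
      generalize (a:ZMod 2) = x
      generalize (b:ZMod 2) = y
      generalize (c:ZMod 2) = z
      generalize (d:ZMod 2) = w
      revert x y z w
      decide
    have hac : (2:ℤ) ∣ (a + c) := by
      have := hparity.1
      rwa [show ((a:ZMod 2) + (c:ZMod 2)) = ((a + c : ℤ) : ZMod 2) by push_cast; ring,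
        ZMod.intCast_zmod_eq_zero_iff_dvd] at this
    have hbd : (2:ℤ) ∣ (b + d) := by
      have := hparity.2
      rwa [show ((b:ZMod 2) + (d:ZMod 2)) = ((b + d : ℤ) : ZMod 2) by push_cast; ring,
        ZMod.intCast_zmod_eq_zero_iff_dvd] at this
    obtain ⟨B, hB⟩ := hac
    obtain ⟨C, hC⟩ := hbd
    rw [pow_succ] at hQ
    have hQ' : (b-C)^2 + B^2 + C^2 + (B-a)^2 = 2^m := by
      have h2 : 2*((b-C)^2 + B^2 + C^2 + (B-a)^2) = 2*2^m := by
        linear_combination hQ - (2*B-a+c)*hB - (2*C-b+d)*hC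
      exact mul_left_cancel₀ (by norm_num : (2:ℤ) ≠ 0) h2
    have hL' : (b-C)*B + B*(C) + C*(B-a) - (B-a)*(b-C) = 0 := by
      have h2 : 2*((b-C)*B + B*C + C*(B-a) - (B-a)*(b-C)) = 2*0 := by
        linear_combination hL - (b+d)*hB - (2*B-2*a)*hC
      exact mul_left_cancel₀ (by norm_num : (2:ℤ) ≠ 0) h2
    obtain ⟨k, hk⟩ := ih (b-C) B C (B-a) hQ' hL'
    refine ⟨k, ?_⟩
    have hvv : v a b c d = ((Real.sqrt 2:ℝ):ℂ) * v (b-C) B C (B-a) := by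
      rw [v_sqrt2_mul]
      congr 1 <;> omega
    rw [hvv, hk, pow_succ]
    ring

noncomputable def sC : ℂ := ((Real.sqrt 2 : ℝ) : ℂ)

def D (z : ℂ) : Prop := ∃ a b c d : ℤ, ∃ m : ℕ, (((Real.sqrt 2:ℝ):ℂ))^m * z = v a b c d

lemma sqrt_two_pow (m : ℕ) : Real.sqrt ((2:ℝ)^m) = (Real.sqrt 2)^m := by
  have h1 : ((Real.sqrt 2)^m)^2 = (2:ℝ)^m := by
    rw [← pow_mul, mul_comm, pow_mul, Real.sq_sqrt (by norm_num : (0:ℝ) ≤ 2)]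
  rw [← h1, Real.sqrt_sq (pow_nonneg (Real.sqrt_nonneg 2) m)]

lemma e2 : Complex.exp (Complex.I * (Real.pi/2:ℝ)) = zz^2 := by
  rw [zz_sq, mul_comm, Complex.exp_mul_I, ← Complex.ofReal_cos, ← Complex.ofReal_sin,
    Real.cos_pi_div_two, Real.sin_pi_div_two]
  simp

lemma e3 : Complex.exp (Complex.I * (3*Real.pi/4:ℝ)) = zz^3 := by
  have h : Complex.I * ((3*Real.pi/4:ℝ):ℂ)
      = Complex.I * ((Real.pi/4:ℝ):ℂ) + Complex.I * ((Real.pi/2:ℝ):ℂ) := by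
    push_cast; ring
  rw [h, Complex.exp_add, e2, show Complex.exp (Complex.I * (Real.pi/4:ℝ)) = zz from rfl]
  ring

lemma expr_eq (a b c d : ℤ) :
    (a:ℂ) + (b:ℂ) * Complex.exp (Complex.I * (Real.pi / 4 : ℝ))
      + (c:ℂ) * Complex.exp (Complex.I * (Real.pi / 2 : ℝ))
      + (d:ℂ) * Complex.exp (Complex.I * (3 * Real.pi / 4 : ℝ)) = v a b c d := by
  rw [e2, e3]; rfl

lemma sqrtC_ne : (((Real.sqrt 2:ℝ):ℂ)) ≠ 0 :=
  Complex.ofReal_ne_zero.mpr (ne_of_gt (Real.sqrt_pos.mpr two_pos))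

lemma mem_dyadic_iff (z : ℂ) : z ∈ dyadicRing ↔ D z := by
  constructor
  · rintro ⟨a,b,c,d,m,rfl⟩
    refine ⟨a,b,c,d,m, ?_⟩
    have hd : ((Real.sqrt ((2:ℝ)^m) : ℝ) : ℂ) = ((Real.sqrt 2:ℝ):ℂ)^m := by
      rw [sqrt_two_pow]; push_cast; ring
    rw [hd, mul_div_cancel₀ _ (pow_ne_zero _ sqrtC_ne), expr_eq]
  · rintro ⟨a,b,c,d,m,h⟩
    refine ⟨a,b,c,d,m, ?_⟩
    have hd : ((Real.sqrt ((2:ℝ)^m) : ℝ) : ℂ) = ((Real.sqrt 2:ℝ):ℂ)^m := by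
      rw [sqrt_two_pow]; push_cast; ring
    rw [hd, expr_eq, ← h, mul_div_cancel_left₀ _ (pow_ne_zero _ sqrtC_ne)]

lemma pump (k : ℕ) : ∀ a b c d : ℤ, ∃ a' b' c' d' : ℤ,
    (((Real.sqrt 2:ℝ):ℂ))^k * v a b c d = v a' b' c' d' := by
  induction k with
  | zero => intro a b c d; exact ⟨a,b,c,d, by rw [pow_zero, one_mul]⟩
  | succ k ih =>
    intro a b c d
    obtain ⟨a',b',c',d',h⟩ := ih (b-d) (a+c) (b+d) (c-a)
    exact ⟨a',b',c',d', by rw [pow_succ, mul_assoc, v_sqrt2_mul, h]⟩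

lemma D_zero : D 0 := ⟨0,0,0,0,0, by simp [v]⟩

lemma D_add {z w : ℂ} (hz : D z) (hw : D w) : D (z + w) := by
  obtain ⟨a,b,c,d,m,hm⟩ := hz
  obtain ⟨a',b',c',d',l,hl⟩ := hw
  obtain ⟨a1,b1,c1,d1,h1⟩ := pump l a b c d
  obtain ⟨a2,b2,c2,d2,h2⟩ := pump m a' b' c' d'
  refine ⟨a1+a2, b1+b2, c1+c2, d1+d2, m + l, ?_⟩
  rw [← v_add, ← h1, ← h2, ← hm, ← hl]
  rw [pow_add]
  ring

lemma D_mul {z w : ℂ} (hz : D z) (hw : D w) : D (z * w) := by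
  obtain ⟨a,b,c,d,m,hm⟩ := hz
  obtain ⟨a',b',c',d',l,hl⟩ := hw
  refine ⟨a*a' - b*d' - c*c' - d*b', a*b' + b*a' - c*d' - d*c',
    a*c' + b*b' + c*a' - d*d', a*d' + b*c' + c*b' + d*a', m + l, ?_⟩
  rw [← v_mul, ← hm, ← hl, pow_add]
  ring

lemma D_conj {z : ℂ} (hz : D z) : D ((starRingEnd ℂ) z) := by
  obtain ⟨a,b,c,d,m,hm⟩ := hz
  refine ⟨a, -d, -c, -b, m, ?_⟩
  rw [← v_conj, ← hm, map_mul, map_pow, Complex.conj_ofReal]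

lemma zz_pow_eq (k : ℕ) : zz^k = Complex.exp (Complex.I * (((k:ℝ) * Real.pi / 4 : ℝ):ℂ)) := by
  rw [show zz^k = Complex.exp ((k:ℕ) * (Complex.I * (Real.pi/4:ℝ))) from
    (Complex.exp_nat_mul _ k).symm]
  congr 1
  push_cast
  ring

/-- If two unitaries over `ℤ[1/√2, i]` differ by a global phase `e^{iθ}`,
then `e^{iθ}` lies in the ring, `θ = kπ/4` for an integer `k`, and in particular
the phase is one of exactly `8` values `e^{ikπ/4}`, `k = 0, …, 7`. -/
theorem stmt5 (n : ℕ) (θ : ℝ)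
    (U U' : Matrix (Fin (2 ^ n)) (Fin (2 ^ n)) ℂ)
    (hU : U ∈ Matrix.unitaryGroup (Fin (2 ^ n)) ℂ)
    (hU' : U' ∈ Matrix.unitaryGroup (Fin (2 ^ n)) ℂ)
    (hUring : ∀ i j, U i j ∈ dyadicRing)
    (hU'ring : ∀ i j, U' i j ∈ dyadicRing)
    (hnz : ∃ i j, U i j ≠ 0)
    (hphase : Complex.exp (Complex.I * (θ : ℝ)) • U = U') :
    Complex.exp (Complex.I * (θ : ℝ)) ∈ dyadicRing ∧
    (∃ k : ℤ, θ = k * Real.pi / 4) ∧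
    (∃ k : Fin 8, Complex.exp (Complex.I * (θ : ℝ))
        = Complex.exp (Complex.I * (((k : ℕ) : ℝ) * Real.pi / 4 : ℝ))) := by
  set x := Complex.exp (Complex.I * (θ : ℝ)) with hxdef
  have i0 : Fin (2^n) := ⟨0, by positivity⟩
  have hU'e : ∀ i j, U' i j = x * U i j := by
    intro i j
    rw [← hphase]
    rfl
  have hsum1 : ∑ j, U i0 j * (starRingEnd ℂ) (U i0 j) = 1 := by
    have h2 := hU.2
    have h3 := congrFun (congrFun h2 i0) i0
    rw [Matrix.mul_apply] at h3
    simp only [Matrix.one_apply_eq] at h3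
    rw [← h3]
    apply Finset.sum_congr rfl
    intro j _
    congr 1
  have hxD : D x := by
    have hxs : x = ∑ j, U' i0 j * (starRingEnd ℂ) (U i0 j) := by
      calc x = x * ∑ j, U i0 j * (starRingEnd ℂ) (U i0 j) := by rw [hsum1, mul_one]
      _ = ∑ j, U' i0 j * (starRingEnd ℂ) (U i0 j) := by
          rw [Finset.mul_sum]
          apply Finset.sum_congr rfl
          intro j _
          rw [hU'e]
          ring
    rw [hxs]
    apply Finset.sum_induction _ D (fun _ _ => D_add) D_zero
    intro j _
    exact D_mul ((mem_dyadic_iff _).1 (hU'ring i0 j)) (D_conj ((mem_dyadic_iff _).1 (hUring i0 j)))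
  obtain ⟨a,b,c,d,m,hm⟩ := hxD
  have hxx : x * (starRingEnd ℂ) x = 1 := by
    rw [hxdef, ← Complex.exp_conj]
    rw [← Complex.exp_add]
    simp
  have hveq : v a b c d * v a (-d) (-c) (-b) = v (2^m) 0 0 0 := by
    rw [← v_conj, ← hm, map_mul, map_pow, Complex.conj_ofReal]
    have : ((Real.sqrt 2:ℝ):ℂ)^m * x * (((Real.sqrt 2:ℝ):ℂ)^m * (starRingEnd ℂ) x)
        = (((Real.sqrt 2:ℝ):ℂ)^2)^m * (x * (starRingEnd ℂ) x) := by ring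
    rw [this, hxx, mul_one]
    unfold v
    push_cast
    rw [show (((Real.sqrt 2:ℝ):ℂ))^2 = ((Real.sqrt 2 * Real.sqrt 2 : ℝ):ℂ) by push_cast; ring,
      sqrt2_sq]
    push_cast
    ring
  rw [v_mul] at hveq
  obtain ⟨h1, h2, _, _⟩ := v_inj hveq
  have hQ : a^2+b^2+c^2+d^2 = 2^m := by linear_combination h1
  have hL : a*b + b*c + c*d - d*a = 0 := by linear_combination h2
  obtain ⟨k, hk⟩ := descent m a b c d hQ hL
  have hxk : x = zz^(k:ℕ) := by
    apply mul_left_cancel₀ (pow_ne_zero m sqrtC_ne)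
    rw [hm, hk]
  refine ⟨(mem_dyadic_iff _).2 ⟨a,b,c,d,m,hm⟩, ?_, ?_⟩
  · have hexp : Complex.exp (Complex.I * (θ:ℝ))
        = Complex.exp (Complex.I * (((k:ℕ):ℝ) * Real.pi / 4 : ℝ)) := by
      rw [← hxdef, hxk, zz_pow_eq]
    rw [Complex.exp_eq_exp_iff_exists_int] at hexp
    obtain ⟨l, hl⟩ := hexp
    have hθ : (θ:ℂ) = (((k:ℕ):ℝ) * Real.pi / 4 : ℝ) + l * (2 * Real.pi) := by
      apply mul_left_cancel₀ Complex.I_ne_zero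
      rw [hl]
      push_cast
      ring
    have hθ' : θ = ((k:ℕ):ℝ) * Real.pi / 4 + l * (2 * Real.pi) := by
      exact_mod_cast hθ
    refine ⟨(k:ℕ) + 8*l, ?_⟩
    rw [hθ']
    push_cast
    ring
  · exact ⟨k, by rw [hxk, zz_pow_eq]⟩
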